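/- The Westergaard mode-I crack stress field is in equilibrium without body forces: on all of D = ℝ² ∖ {(x,0) : x ≤ 0}, the stress matrix σ defined by the polar formulas satisfies div σ = 0, i.e. ∂σ₁₁/∂x + ∂σ₁₂/∂y = 0 and ∂σ₂₁/∂x + ∂σ₂₂/∂y = 0 at every point of D. (This is the claim in Example 4.4 that the given stress is an exact solution of the equilibrium equation ∇·σ = f with vanishing body force away from the crack.) -/

import Mathlib

open Real

/-- The polar radius `r = √(x² + y²)`. -/
noncomputable def crackR (x y : ℝ) : ℝ := Real.sqrt (x ^ 2 + y ^ 2)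

/-- The polar angle `θ ∈ (−π, π]`, the argument of `x + iy`. -/
noncomputable def crackθ (x y : ℝ) : ℝ := Complex.arg (x + y * Complex.I)

/-- The `(1,1)` entry of the Westergaard mode-I stress field. -/
noncomputable def crackσ11 (K x y : ℝ) : ℝ :=
  K / Real.sqrt (2 * π * crackR x y) *
    (Real.cos (crackθ x y / 2) *
      (1 - Real.sin (crackθ x y / 2) * Real.sin (3 * crackθ x y / 2)))

/-- The `(1,2)` (and `(2,1)`) entry of the Westergaard mode-I stress field. -/
noncomputable def crackσ12 (K x y : ℝ) : ℝ :=
  K / Real.sqrt (2 * π * crackR x y) *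
    (Real.cos (crackθ x y / 2) * Real.sin (crackθ x y / 2) *
      Real.cos (3 * crackθ x y / 2))

/-- The `(2,2)` entry of the Westergaard mode-I stress field. -/
noncomputable def crackσ22 (K x y : ℝ) : ℝ :=
  K / Real.sqrt (2 * π * crackR x y) *
    (Real.cos (crackθ x y / 2) *
      (1 + Real.sin (crackθ x y / 2) * Real.sin (3 * crackθ x y / 2)))

/-- Partial derivative with respect to the first variable. -/
noncomputable def pdx (f : ℝ → ℝ → ℝ) (x y : ℝ) : ℝ := deriv (fun t => f t y) x

/-- Partial derivative with respect to the second variable. -/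
noncomputable def pdy (f : ℝ → ℝ → ℝ) (x y : ℝ) : ℝ := deriv (fun t => f x t) y

lemma crack_pos {x y : ℝ} (hD : ¬(y = 0 ∧ x ≤ 0)) : 0 < x ^ 2 + y ^ 2 := by
  rcases eq_or_ne y 0 with hy | hy
  · have hx : 0 < x := by push_neg at hD; exact lt_of_not_ge (by simpa [hy] using hD hy)
    positivity
  · positivity

lemma crackR_pos {x y : ℝ} (hD : ¬(y = 0 ∧ x ≤ 0)) : 0 < crackR x y :=
  Real.sqrt_pos.mpr (crack_pos hD)

lemma crackR_sq {x y : ℝ} (hD : ¬(y = 0 ∧ x ≤ 0)) : (crackR x y) ^ 2 = x ^ 2 + y ^ 2 :=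
  Real.sq_sqrt (crack_pos hD).le

lemma crackR_add_pos {x y : ℝ} (hD : ¬(y = 0 ∧ x ≤ 0)) : 0 < crackR x y + x := by
  rcases eq_or_ne y 0 with hy | hy
  · have hx : 0 < x := by push_neg at hD; exact lt_of_not_ge (by simpa [hy] using hD hy)
    have := (crackR_pos hD).le; linarith
  · have hy2 : 0 < y ^ 2 := by positivity
    have h1 := (crackR_pos hD).le
    have h2 := crackR_sq hD
    nlinarith [h1, h2]

lemma crack_ne_zero {x y : ℝ} (hD : ¬(y = 0 ∧ x ≤ 0)) : (x : ℂ) + y * Complex.I ≠ 0 := by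
  intro h
  have hx : x = 0 := by simpa using congrArg Complex.re h
  have hy : y = 0 := by simpa using congrArg Complex.im h
  exact hD ⟨hy, by simp [hx]⟩

lemma crack_abs {x y : ℝ} : ‖(x : ℂ) + y * Complex.I‖ = crackR x y := by
  rw [Complex.norm_def, Complex.normSq_add_mul_I, crackR]

lemma crack_cos {x y : ℝ} (hD : ¬(y = 0 ∧ x ≤ 0)) :
    Real.cos (crackθ x y) = x / crackR x y := by
  rw [crackθ, Complex.cos_arg (crack_ne_zero hD), crack_abs]; simp

lemma crack_sin {x y : ℝ} :
    Real.sin (crackθ x y) = y / crackR x y := by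
  rw [crackθ, Complex.sin_arg, crack_abs]; simp

lemma crack_mem {x y : ℝ} (hD : ¬(y = 0 ∧ x ≤ 0)) :
    -π ≤ crackθ x y ∧ crackθ x y ≤ π :=
  ⟨(Complex.neg_pi_lt_arg _).le, Complex.arg_le_pi _⟩

-- cos half
lemma crack_cos_half {x y : ℝ} (hD : ¬(y = 0 ∧ x ≤ 0)) :
    Real.cos (crackθ x y / 2) = Real.sqrt ((crackR x y + x) / (2 * crackR x y)) := by
  have hr := (crackR_pos hD).ne'
  have h : (1 + x / crackR x y) / 2 = (crackR x y + x) / (2 * crackR x y) := by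
    rw [div_eq_div_iff (by norm_num) (by positivity), add_mul, div_mul_eq_mul_div,
      mul_comm 2 (crackR x y), mul_div_assoc, mul_div_cancel_left₀ _ hr]
    ring
  rw [Real.cos_half (crack_mem hD).1 (crack_mem hD).2, crack_cos hD, h]

-- cos half squared
lemma crack_cos_half_sq {x y : ℝ} (hD : ¬(y = 0 ∧ x ≤ 0)) :
    Real.cos (crackθ x y / 2) ^ 2 = (crackR x y + x) / (2 * crackR x y) := by
  rw [crack_cos_half hD]
  refine Real.sq_sqrt ?_
  have hr := crackR_pos hD
  have := crackR_add_pos hD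
  positivity

lemma crack_sin_half_sq {x y : ℝ} (hD : ¬(y = 0 ∧ x ≤ 0)) :
    Real.sin (crackθ x y / 2) ^ 2 = (crackR x y - x) / (2 * crackR x y) := by
  have h := crack_cos_half_sq hD
  have h2 : Real.sin (crackθ x y / 2) ^ 2 = 1 - Real.cos (crackθ x y / 2) ^ 2 := by
    have := Real.sin_sq_add_cos_sq (crackθ x y / 2); linarith
  rw [h2, h]
  have hr := (crackR_pos hD).ne'
  field_simp; ring

lemma crack_sin_cos_half {x y : ℝ} (hD : ¬(y = 0 ∧ x ≤ 0)) :
    Real.sin (crackθ x y / 2) * Real.cos (crackθ x y / 2) = y / (2 * crackR x y) := by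
  have h := Real.sin_two_mul (crackθ x y / 2)
  have h2 : 2 * (crackθ x y / 2) = crackθ x y := by ring
  rw [h2] at h
  rw [crack_sin] at h
  have hr := (crackR_pos hD).ne'
  field_simp at h ⊢
  linarith


lemma crack_prefactor (K : ℝ) {x y : ℝ} (hD : ¬(y = 0 ∧ x ≤ 0)) :
    K / Real.sqrt (2 * π * crackR x y) * Real.cos (crackθ x y / 2) =
      K * Real.sqrt (crackR x y + x) / (2 * Real.sqrt π * crackR x y) := by
  have hr := crackR_pos hD
  have hrx := crackR_add_pos hD
  rw [crack_cos_half hD,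
    Real.sqrt_div hrx.le, show (2:ℝ) * π * crackR x y = 2 * π * crackR x y from rfl,
    Real.sqrt_mul (by positivity : (0:ℝ) ≤ 2 * π),
    Real.sqrt_mul (by norm_num : (0:ℝ) ≤ 2) π,
    Real.sqrt_mul (by norm_num : (0:ℝ) ≤ 2) (crackR x y)]
  have h2 : Real.sqrt 2 * Real.sqrt 2 = 2 := Real.mul_self_sqrt (by norm_num)
  have hrr : Real.sqrt (crackR x y) * Real.sqrt (crackR x y) = crackR x y :=
    Real.mul_self_sqrt hr.le
  have h2' : Real.sqrt 2 ≠ 0 := by positivity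
  have hπ' : Real.sqrt π ≠ 0 := by positivity
  have hrr' : Real.sqrt (crackR x y) ≠ 0 := by positivity
  rw [div_mul_div_comm]
  rw [div_eq_div_iff (by positivity) (by positivity)]
  linear_combination (-(K * Real.sqrt (crackR x y + x) * Real.sqrt π *
      Real.sqrt (crackR x y) * Real.sqrt (crackR x y))) * h2 -
    (2 * K * Real.sqrt (crackR x y + x) * Real.sqrt π) * hrr

lemma crackσ11_eq (K : ℝ) {x y : ℝ} (hD : ¬(y = 0 ∧ x ≤ 0)) :
    crackσ11 K x y = K * Real.sqrt (crackR x y + x) *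
      ((crackR x y) ^ 2 - crackR x y * x + 2 * x ^ 2) /
        (4 * Real.sqrt π * (crackR x y) ^ 3) := by
  have hr := (crackR_pos hD).ne'
  have hπ' : Real.sqrt π ≠ 0 := by positivity
  have h3 : 3 * crackθ x y / 2 = 3 * (crackθ x y / 2) := by ring
  have e1 : crackσ11 K x y = (K / Real.sqrt (2 * π * crackR x y) *
      Real.cos (crackθ x y / 2)) *
      (1 - 3 * (Real.sin (crackθ x y / 2) ^ 2) + 4 * (Real.sin (crackθ x y / 2) ^ 2) ^ 2) := by
    rw [crackσ11, h3, Real.sin_three_mul]; ring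
  rw [e1, crack_sin_half_sq hD, crack_prefactor K hD]
  field_simp
  ring

lemma crackσ12_eq (K : ℝ) {x y : ℝ} (hD : ¬(y = 0 ∧ x ≤ 0)) :
    crackσ12 K x y = K * Real.sqrt (crackR x y + x) *
      (y * (2 * x - crackR x y)) / (4 * Real.sqrt π * (crackR x y) ^ 3) := by
  have hr := (crackR_pos hD).ne'
  have hπ' : Real.sqrt π ≠ 0 := by positivity
  have h3 : 3 * crackθ x y / 2 = 3 * (crackθ x y / 2) := by ring
  have e1 : crackσ12 K x y = (K / Real.sqrt (2 * π * crackR x y) *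
      Real.cos (crackθ x y / 2)) *
      ((Real.sin (crackθ x y / 2) * Real.cos (crackθ x y / 2)) *
        (4 * (Real.cos (crackθ x y / 2) ^ 2) - 3)) := by
    rw [crackσ12, h3, Real.cos_three_mul]; ring
  rw [e1, crack_sin_cos_half hD, crack_cos_half_sq hD, crack_prefactor K hD]
  field_simp
  ring

lemma crackσ22_eq (K : ℝ) {x y : ℝ} (hD : ¬(y = 0 ∧ x ≤ 0)) :
    crackσ22 K x y = K * Real.sqrt (crackR x y + x) *
      (3 * (crackR x y) ^ 2 + crackR x y * x - 2 * x ^ 2) /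
        (4 * Real.sqrt π * (crackR x y) ^ 3) := by
  have hr := (crackR_pos hD).ne'
  have hπ' : Real.sqrt π ≠ 0 := by positivity
  have h3 : 3 * crackθ x y / 2 = 3 * (crackθ x y / 2) := by ring
  have e1 : crackσ22 K x y = (K / Real.sqrt (2 * π * crackR x y) *
      Real.cos (crackθ x y / 2)) *
      (1 + 3 * (Real.sin (crackθ x y / 2) ^ 2) - 4 * (Real.sin (crackθ x y / 2) ^ 2) ^ 2) := by
    rw [crackσ22, h3, Real.sin_three_mul]; ring
  rw [e1, crack_sin_half_sq hD, crack_prefactor K hD]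
  field_simp
  ring


lemma crackR_def (x y : ℝ) : crackR x y = Real.sqrt (x ^ 2 + y ^ 2) := rfl

lemma crack_ev_x {x y : ℝ} (hD : ¬(y = 0 ∧ x ≤ 0)) :
    ∀ᶠ t in nhds x, ¬(y = 0 ∧ t ≤ 0) := by
  rcases eq_or_ne y 0 with hy | hy
  · have hx : 0 < x := by push_neg at hD; exact lt_of_not_ge (by simpa [hy] using hD hy)
    exact (eventually_gt_nhds hx).mono fun t ht h => absurd h.2 (not_le.mpr ht)
  · exact Filter.Eventually.of_forall fun t h => hy h.1

lemma crack_ev_y {x y : ℝ} (hD : ¬(y = 0 ∧ x ≤ 0)) :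
    ∀ᶠ t in nhds y, ¬(t = 0 ∧ x ≤ 0) := by
  rcases eq_or_ne y 0 with hy | hy
  · have hx : 0 < x := by push_neg at hD; exact lt_of_not_ge (by simpa [hy] using hD hy)
    exact Filter.Eventually.of_forall fun t h => absurd hx (not_lt.mpr h.2)
  · exact (eventually_ne_nhds hy).mono fun t ht h => ht h.1

-- derivative of r in x
lemma crack_hu_x {x : ℝ} (y : ℝ) (h : 0 < x ^ 2 + y ^ 2) :
    HasDerivAt (fun t : ℝ => Real.sqrt (t ^ 2 + y ^ 2))
      (x / Real.sqrt (x ^ 2 + y ^ 2)) x := by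
  have h1 : HasDerivAt (fun t : ℝ => t ^ 2 + y ^ 2) (2 * x) x := by
    simpa using (hasDerivAt_pow 2 x).add_const (y ^ 2)
  have h2 := h1.sqrt h.ne'
  convert h2 using 1
  have : Real.sqrt (x ^ 2 + y ^ 2) ≠ 0 := by positivity
  field_simp

lemma crack_hu_y (x : ℝ) {y : ℝ} (h : 0 < x ^ 2 + y ^ 2) :
    HasDerivAt (fun t : ℝ => Real.sqrt (x ^ 2 + t ^ 2))
      (y / Real.sqrt (x ^ 2 + y ^ 2)) y := by
  have h1 : HasDerivAt (fun t : ℝ => x ^ 2 + t ^ 2) (2 * y) y := by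
    simpa using (hasDerivAt_pow 2 y).const_add (x ^ 2)
  have h2 := h1.sqrt h.ne'
  convert h2 using 1
  have : Real.sqrt (x ^ 2 + y ^ 2) ≠ 0 := by positivity
  field_simp

lemma crack_hG_x {x y : ℝ} (h : 0 < x ^ 2 + y ^ 2) (hrx : 0 < Real.sqrt (x ^ 2 + y ^ 2) + x) :
    HasDerivAt (fun t : ℝ => Real.sqrt (Real.sqrt (t ^ 2 + y ^ 2) + t))
      (Real.sqrt (Real.sqrt (x ^ 2 + y ^ 2) + x) / (2 * Real.sqrt (x ^ 2 + y ^ 2))) x := by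
  have hi : HasDerivAt (fun t : ℝ => Real.sqrt (t ^ 2 + y ^ 2) + t)
      (x / Real.sqrt (x ^ 2 + y ^ 2) + 1) x := (crack_hu_x y h).add (hasDerivAt_id x)
  have hg := hi.sqrt hrx.ne'
  convert hg using 1
  have hr : Real.sqrt (x ^ 2 + y ^ 2) ≠ 0 := by positivity
  have hG : Real.sqrt (Real.sqrt (x ^ 2 + y ^ 2) + x) ≠ 0 := by positivity
  have hG2 : Real.sqrt (Real.sqrt (x ^ 2 + y ^ 2) + x) ^ 2 = Real.sqrt (x ^ 2 + y ^ 2) + x :=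
    Real.sq_sqrt hrx.le
  field_simp
  linear_combination hG2

lemma crack_hG_y {x y : ℝ} (h : 0 < x ^ 2 + y ^ 2) (hrx : 0 < Real.sqrt (x ^ 2 + y ^ 2) + x) :
    HasDerivAt (fun t : ℝ => Real.sqrt (Real.sqrt (x ^ 2 + t ^ 2) + x))
      (y * Real.sqrt (Real.sqrt (x ^ 2 + y ^ 2) + x) /
        (2 * Real.sqrt (x ^ 2 + y ^ 2) * (Real.sqrt (x ^ 2 + y ^ 2) + x))) y := by
  have hi : HasDerivAt (fun t : ℝ => Real.sqrt (x ^ 2 + t ^ 2) + x)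
      (y / Real.sqrt (x ^ 2 + y ^ 2)) y := (crack_hu_y x h).add_const x
  have hg := hi.sqrt (by rw [show Real.sqrt (x ^ 2 + y ^ 2) + x =
    Real.sqrt (x ^ 2 + y ^ 2) + x from rfl]; exact hrx.ne')
  convert hg using 1
  have hr : Real.sqrt (x ^ 2 + y ^ 2) ≠ 0 := by positivity
  have hG : Real.sqrt (Real.sqrt (x ^ 2 + y ^ 2) + x) ≠ 0 := by positivity
  have hG2 : Real.sqrt (Real.sqrt (x ^ 2 + y ^ 2) + x) ^ 2 = Real.sqrt (x ^ 2 + y ^ 2) + x :=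
    Real.sq_sqrt hrx.le
  field_simp
  linear_combination y * hG2

lemma crack_pdx_11 (K : ℝ) {x y : ℝ} (hD : ¬(y = 0 ∧ x ≤ 0)) :
    pdx (crackσ11 K) x y =
      K * Real.sqrt (crackR x y + x) *
        (-(crackR x y ^ 3) / 2 + 5 / 2 * x * crackR x y ^ 2 + 3 * x ^ 2 * crackR x y
          - 6 * x ^ 3) / (4 * Real.sqrt π * crackR x y ^ 5) := by
  have h := crack_pos hD
  have hrx : 0 < Real.sqrt (x ^ 2 + y ^ 2) + x := by
    have := crackR_add_pos hD; rwa [crackR_def] at this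
  have hr0 : (0:ℝ) < Real.sqrt (x ^ 2 + y ^ 2) := Real.sqrt_pos.mpr h
  -- the algebraic representative
  set f : ℝ → ℝ := fun t => K * Real.sqrt (Real.sqrt (t ^ 2 + y ^ 2) + t) *
      (Real.sqrt (t ^ 2 + y ^ 2) ^ 2 - Real.sqrt (t ^ 2 + y ^ 2) * t + 2 * t ^ 2) /
      (4 * Real.sqrt π * Real.sqrt (t ^ 2 + y ^ 2) ^ 3) with hf
  have hev : (fun t => crackσ11 K t y) =ᶠ[nhds x] f := by
    refine (crack_ev_x hD).mono fun t ht => ?_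
    show crackσ11 K t y = f t
    rw [crackσ11_eq K ht, hf]
    simp only [crackR_def]
  have hu := crack_hu_x y h
  have hG := crack_hG_x h hrx
  have hP : HasDerivAt (fun t : ℝ =>
      Real.sqrt (t ^ 2 + y ^ 2) ^ 2 - Real.sqrt (t ^ 2 + y ^ 2) * t + 2 * t ^ 2)
      (2 * Real.sqrt (x ^ 2 + y ^ 2) ^ 1 * (x / Real.sqrt (x ^ 2 + y ^ 2)) -
        (x / Real.sqrt (x ^ 2 + y ^ 2) * x + Real.sqrt (x ^ 2 + y ^ 2) * 1) +
        2 * (2 * x ^ 1)) x := by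
    exact ((hu.pow 2).sub (hu.mul (hasDerivAt_id x))).add ((hasDerivAt_pow 2 x).const_mul 2)
  have hN : HasDerivAt (fun t : ℝ => K * Real.sqrt (Real.sqrt (t ^ 2 + y ^ 2) + t) *
      (Real.sqrt (t ^ 2 + y ^ 2) ^ 2 - Real.sqrt (t ^ 2 + y ^ 2) * t + 2 * t ^ 2))
      (K * (Real.sqrt (Real.sqrt (x ^ 2 + y ^ 2) + x) / (2 * Real.sqrt (x ^ 2 + y ^ 2))) *
        (Real.sqrt (x ^ 2 + y ^ 2) ^ 2 - Real.sqrt (x ^ 2 + y ^ 2) * x + 2 * x ^ 2) +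
        K * Real.sqrt (Real.sqrt (x ^ 2 + y ^ 2) + x) *
        (2 * Real.sqrt (x ^ 2 + y ^ 2) ^ 1 * (x / Real.sqrt (x ^ 2 + y ^ 2)) -
          (x / Real.sqrt (x ^ 2 + y ^ 2) * x + Real.sqrt (x ^ 2 + y ^ 2) * 1) +
          2 * (2 * x ^ 1))) x := (hG.const_mul K).mul hP
  have hDen : HasDerivAt (fun t : ℝ => 4 * Real.sqrt π * Real.sqrt (t ^ 2 + y ^ 2) ^ 3)
      (4 * Real.sqrt π * (3 * Real.sqrt (x ^ 2 + y ^ 2) ^ 2 *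
        (x / Real.sqrt (x ^ 2 + y ^ 2)))) x := by
    exact (hu.pow 3).const_mul (4 * Real.sqrt π)
  have hq := hN.div hDen (by positivity)
  have hfd : HasDerivAt f
      (K * Real.sqrt (Real.sqrt (x ^ 2 + y ^ 2) + x) *
        (-(Real.sqrt (x ^ 2 + y ^ 2) ^ 3) / 2 + 5 / 2 * x * Real.sqrt (x ^ 2 + y ^ 2) ^ 2 +
          3 * x ^ 2 * Real.sqrt (x ^ 2 + y ^ 2) - 6 * x ^ 3) /
        (4 * Real.sqrt π * Real.sqrt (x ^ 2 + y ^ 2) ^ 5)) x := by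
    rw [hf]
    refine hq.congr_deriv (Eq.symm ?_)
    have hr : Real.sqrt (x ^ 2 + y ^ 2) ≠ 0 := hr0.ne'
    have hπ' : Real.sqrt π ≠ 0 := by positivity
    have hr2 : Real.sqrt (x ^ 2 + y ^ 2) ^ 2 = x ^ 2 + y ^ 2 := Real.sq_sqrt h.le
    field_simp
    ring
  rw [pdx, hev.deriv_eq, hfd.deriv, crackR_def]

lemma crack_pdy_12 (K : ℝ) {x y : ℝ} (hD : ¬(y = 0 ∧ x ≤ 0)) :
    pdy (crackσ12 K) x y =
      -(K * Real.sqrt (crackR x y + x) *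
        (-(crackR x y ^ 3) / 2 + 5 / 2 * x * crackR x y ^ 2 + 3 * x ^ 2 * crackR x y
          - 6 * x ^ 3) / (4 * Real.sqrt π * crackR x y ^ 5)) := by
  have h := crack_pos hD
  have hrx : 0 < Real.sqrt (x ^ 2 + y ^ 2) + x := by
    have := crackR_add_pos hD; rwa [crackR_def] at this
  have hr0 : (0:ℝ) < Real.sqrt (x ^ 2 + y ^ 2) := Real.sqrt_pos.mpr h
  set f : ℝ → ℝ := fun t => K * Real.sqrt (Real.sqrt (x ^ 2 + t ^ 2) + x) *
      (t * (2 * x - Real.sqrt (x ^ 2 + t ^ 2))) /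
      (4 * Real.sqrt π * Real.sqrt (x ^ 2 + t ^ 2) ^ 3) with hf
  have hev : (fun t => crackσ12 K x t) =ᶠ[nhds y] f := by
    refine (crack_ev_y hD).mono fun t ht => ?_
    show crackσ12 K x t = f t
    rw [crackσ12_eq K ht, hf]
    simp only [crackR_def]
  have hu := crack_hu_y x h
  have hG := crack_hG_y h hrx
  have hP : HasDerivAt (fun t : ℝ => t * (2 * x - Real.sqrt (x ^ 2 + t ^ 2)))
      (1 * (2 * x - Real.sqrt (x ^ 2 + y ^ 2)) +
        y * -(y / Real.sqrt (x ^ 2 + y ^ 2))) y :=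
    (hasDerivAt_id y).mul (hu.const_sub (2 * x))
  have hN := (hG.const_mul K).mul hP
  have hDen : HasDerivAt (fun t : ℝ => 4 * Real.sqrt π * Real.sqrt (x ^ 2 + t ^ 2) ^ 3)
      (4 * Real.sqrt π * (3 * Real.sqrt (x ^ 2 + y ^ 2) ^ 2 *
        (y / Real.sqrt (x ^ 2 + y ^ 2)))) y := (hu.pow 3).const_mul (4 * Real.sqrt π)
  have hq := hN.div hDen (by positivity)
  have hfd : HasDerivAt f
      (-(K * Real.sqrt (Real.sqrt (x ^ 2 + y ^ 2) + x) *
        (-(Real.sqrt (x ^ 2 + y ^ 2) ^ 3) / 2 + 5 / 2 * x * Real.sqrt (x ^ 2 + y ^ 2) ^ 2 +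
          3 * x ^ 2 * Real.sqrt (x ^ 2 + y ^ 2) - 6 * x ^ 3) /
        (4 * Real.sqrt π * Real.sqrt (x ^ 2 + y ^ 2) ^ 5))) y := by
    rw [hf]
    refine hq.congr_deriv (Eq.symm ?_)
    have hr : Real.sqrt (x ^ 2 + y ^ 2) ≠ 0 := hr0.ne'
    have hπ' : Real.sqrt π ≠ 0 := by positivity
    have hr2 : Real.sqrt (x ^ 2 + y ^ 2) ^ 2 = x ^ 2 + y ^ 2 := Real.sq_sqrt h.le
    simp only [Pi.mul_apply]
    field_simp
    linear_combination K * (Real.sqrt (x ^ 2 + y ^ 2) * (2 * x - Real.sqrt (x ^ 2 + y ^ 2)) - 2 * Real.sqrt (x ^ 2 + y ^ 2) * (Real.sqrt (x ^ 2 + y ^ 2) + x) - 6 * (Real.sqrt (x ^ 2 + y ^ 2) + x) * (2 * x - Real.sqrt (x ^ 2 + y ^ 2))) * hr2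
  rw [pdy, hev.deriv_eq, hfd.deriv, crackR_def]

lemma crack_pdx_12 (K : ℝ) {x y : ℝ} (hD : ¬(y = 0 ∧ x ≤ 0)) :
    pdx (crackσ12 K) x y =
      K * Real.sqrt (crackR x y + x) * y *
        (3 / 2 * crackR x y ^ 2 + 3 * x * crackR x y - 6 * x ^ 2) /
        (4 * Real.sqrt π * crackR x y ^ 5) := by
  have h := crack_pos hD
  have hrx : 0 < Real.sqrt (x ^ 2 + y ^ 2) + x := by
    have := crackR_add_pos hD; rwa [crackR_def] at this
  have hr0 : (0:ℝ) < Real.sqrt (x ^ 2 + y ^ 2) := Real.sqrt_pos.mpr h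
  set f : ℝ → ℝ := fun t => K * Real.sqrt (Real.sqrt (t ^ 2 + y ^ 2) + t) *
      (y * (2 * t - Real.sqrt (t ^ 2 + y ^ 2))) /
      (4 * Real.sqrt π * Real.sqrt (t ^ 2 + y ^ 2) ^ 3) with hf
  have hev : (fun t => crackσ12 K t y) =ᶠ[nhds x] f := by
    refine (crack_ev_x hD).mono fun t ht => ?_
    show crackσ12 K t y = f t
    rw [crackσ12_eq K ht, hf]
    simp only [crackR_def]
  have hu := crack_hu_x y h
  have hG := crack_hG_x h hrx
  have hP : HasDerivAt (fun t : ℝ => y * (2 * t - Real.sqrt (t ^ 2 + y ^ 2)))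
      (y * (2 - x / Real.sqrt (x ^ 2 + y ^ 2))) x := by
    have h2 : HasDerivAt (fun t : ℝ => 2 * t - Real.sqrt (t ^ 2 + y ^ 2))
        (2 - x / Real.sqrt (x ^ 2 + y ^ 2)) x := by
      exact (((hasDerivAt_id' x).const_mul 2).sub hu).congr_deriv (by norm_num)
    exact h2.const_mul y
  have hN := (hG.const_mul K).mul hP
  have hDen : HasDerivAt (fun t : ℝ => 4 * Real.sqrt π * Real.sqrt (t ^ 2 + y ^ 2) ^ 3)
      (4 * Real.sqrt π * (3 * Real.sqrt (x ^ 2 + y ^ 2) ^ 2 *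
        (x / Real.sqrt (x ^ 2 + y ^ 2)))) x := (hu.pow 3).const_mul (4 * Real.sqrt π)
  have hq := hN.div hDen (by positivity)
  have hfd : HasDerivAt f
      (K * Real.sqrt (Real.sqrt (x ^ 2 + y ^ 2) + x) * y *
        (3 / 2 * Real.sqrt (x ^ 2 + y ^ 2) ^ 2 + 3 * x * Real.sqrt (x ^ 2 + y ^ 2) - 6 * x ^ 2) /
        (4 * Real.sqrt π * Real.sqrt (x ^ 2 + y ^ 2) ^ 5)) x := by
    rw [hf]
    refine hq.congr_deriv (Eq.symm ?_)
    have hr : Real.sqrt (x ^ 2 + y ^ 2) ≠ 0 := hr0.ne'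
    have hπ' : Real.sqrt π ≠ 0 := by positivity
    have hr2 : Real.sqrt (x ^ 2 + y ^ 2) ^ 2 = x ^ 2 + y ^ 2 := Real.sq_sqrt h.le
    simp only [Pi.mul_apply]
    field_simp
    ring
  rw [pdx, hev.deriv_eq, hfd.deriv, crackR_def]

lemma crack_pdy_22 (K : ℝ) {x y : ℝ} (hD : ¬(y = 0 ∧ x ≤ 0)) :
    pdy (crackσ22 K) x y =
      -(K * Real.sqrt (crackR x y + x) * y *
        (3 / 2 * crackR x y ^ 2 + 3 * x * crackR x y - 6 * x ^ 2) /
        (4 * Real.sqrt π * crackR x y ^ 5)) := by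
  have h := crack_pos hD
  have hrx : 0 < Real.sqrt (x ^ 2 + y ^ 2) + x := by
    have := crackR_add_pos hD; rwa [crackR_def] at this
  have hr0 : (0:ℝ) < Real.sqrt (x ^ 2 + y ^ 2) := Real.sqrt_pos.mpr h
  set f : ℝ → ℝ := fun t => K * Real.sqrt (Real.sqrt (x ^ 2 + t ^ 2) + x) *
      (3 * Real.sqrt (x ^ 2 + t ^ 2) ^ 2 + Real.sqrt (x ^ 2 + t ^ 2) * x - 2 * x ^ 2) /
      (4 * Real.sqrt π * Real.sqrt (x ^ 2 + t ^ 2) ^ 3) with hf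
  have hev : (fun t => crackσ22 K x t) =ᶠ[nhds y] f := by
    refine (crack_ev_y hD).mono fun t ht => ?_
    show crackσ22 K x t = f t
    rw [crackσ22_eq K ht, hf]
    simp only [crackR_def]
  have hu := crack_hu_y x h
  have hG := crack_hG_y h hrx
  have hP : HasDerivAt (fun t : ℝ =>
      3 * Real.sqrt (x ^ 2 + t ^ 2) ^ 2 + Real.sqrt (x ^ 2 + t ^ 2) * x - 2 * x ^ 2)
      (3 * (2 * Real.sqrt (x ^ 2 + y ^ 2) ^ 1 * (y / Real.sqrt (x ^ 2 + y ^ 2))) +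
        (y / Real.sqrt (x ^ 2 + y ^ 2)) * x) y :=
    (((hu.pow 2).const_mul 3).add (hu.mul_const x)).sub_const (2 * x ^ 2)
  have hN := (hG.const_mul K).mul hP
  have hDen : HasDerivAt (fun t : ℝ => 4 * Real.sqrt π * Real.sqrt (x ^ 2 + t ^ 2) ^ 3)
      (4 * Real.sqrt π * (3 * Real.sqrt (x ^ 2 + y ^ 2) ^ 2 *
        (y / Real.sqrt (x ^ 2 + y ^ 2)))) y := (hu.pow 3).const_mul (4 * Real.sqrt π)
  have hq := hN.div hDen (by positivity)
  have hfd : HasDerivAt f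
      (-(K * Real.sqrt (Real.sqrt (x ^ 2 + y ^ 2) + x) * y *
        (3 / 2 * Real.sqrt (x ^ 2 + y ^ 2) ^ 2 + 3 * x * Real.sqrt (x ^ 2 + y ^ 2) - 6 * x ^ 2) /
        (4 * Real.sqrt π * Real.sqrt (x ^ 2 + y ^ 2) ^ 5))) y := by
    rw [hf]
    refine hq.congr_deriv (Eq.symm ?_)
    have hr : Real.sqrt (x ^ 2 + y ^ 2) ≠ 0 := hr0.ne'
    have hπ' : Real.sqrt π ≠ 0 := by positivity
    have hr2 : Real.sqrt (x ^ 2 + y ^ 2) ^ 2 = x ^ 2 + y ^ 2 := Real.sq_sqrt h.le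
    simp only [Pi.mul_apply]
    field_simp
    ring
  rw [pdy, hev.deriv_eq, hfd.deriv, crackR_def]

/-- The Westergaard mode-I stress field is divergence-free (equilibrium without body
forces) on the slit plane `D = ℝ² ∖ {(x,0) : x ≤ 0}`. -/
theorem crack_stress_divergence_free (K : ℝ) (hK : 0 < K) (x y : ℝ)
    (hD : ¬(y = 0 ∧ x ≤ 0)) :
    pdx (crackσ11 K) x y + pdy (crackσ12 K) x y = 0 ∧
      pdx (crackσ12 K) x y + pdy (crackσ22 K) x y = 0 := by
  constructor
  · rw [crack_pdx_11 K hD, crack_pdy_12 K hD]; ring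
  · rw [crack_pdx_12 K hD, crack_pdy_22 K hD]; ring
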